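/- For r > 0 with 2πr > arccosh(3/2), lim_{N→∞} (2πr/N) log J_N(E; exp(2πr/N)) = 2Γ(πr + φ(r)/2) - 2Γ(πr - φ(r)/2), where Γ(z) = ∫₀^z log(2 sinh x) dx and φ(r) = arccosh(cosh(2πr) - 1/2). -/

import Mathlib

open Real

/-- Inverse hyperbolic cosine (for `1 ≤ x`). -/
noncomputable def arcosh (x : ℝ) : ℝ := Real.log (x + Real.sqrt (x ^ 2 - 1))

noncomputable def JFigEightReal (r : ℝ) (N : ℕ) : ℝ :=
  ∑ k ∈ Finset.range N, ∏ j ∈ Finset.Icc 1 k,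
    (2 * Real.cosh (2 * π * r) - 2 * Real.cosh (2 * π * r * j / N))

noncomputable def GammaLob (z : ℝ) : ℝ := ∫ x in (0 : ℝ)..z, Real.log (2 * Real.sinh x)

noncomputable def phih (r : ℝ) : ℝ := _root_.arcosh (Real.cosh (2 * π * r) - 1 / 2)

lemma cosh_arcosh {y : ℝ} (hy : 1 ≤ y) : Real.cosh (_root_.arcosh y) = y := by
  have hs : Real.sqrt (y ^ 2 - 1) ^ 2 = y ^ 2 - 1 := Real.sq_sqrt (by nlinarith)
  have hs0 : 0 ≤ Real.sqrt (y ^ 2 - 1) := Real.sqrt_nonneg _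
  have ht : 0 < y + Real.sqrt (y ^ 2 - 1) := by nlinarith
  rw [_root_.arcosh, Real.cosh_log ht]
  have hinv : (y + Real.sqrt (y ^ 2 - 1))⁻¹ = y - Real.sqrt (y ^ 2 - 1) := by
    apply inv_eq_of_mul_eq_one_right
    nlinarith
  rw [hinv]; ring

lemma arcosh_nonneg {y : ℝ} (hy : 1 ≤ y) : 0 ≤ _root_.arcosh y :=
  Real.log_nonneg (by nlinarith [Real.sqrt_nonneg (y ^ 2 - 1)])

lemma two_cosh_sub (p q : ℝ) :
    2 * Real.cosh (p + q) - 2 * Real.cosh (p - q) = 2 * Real.sinh p * (2 * Real.sinh q) := by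
  rw [Real.cosh_add, Real.cosh_sub]; ring

lemma sinh_le_mul_exp {x : ℝ} (hx : 0 ≤ x) : Real.sinh x ≤ x * Real.exp x := by
  rw [Real.sinh_eq]
  have h1 := Real.add_one_le_exp (-x)
  have h2 : (1:ℝ) ≤ Real.exp x := Real.one_le_exp hx
  have h3 : Real.exp (-x) * Real.exp x = 1 := by rw [← Real.exp_add]; simp
  have h4 : (-x + 1) * Real.exp x ≤ Real.exp (-x) * Real.exp x :=
    mul_le_mul_of_nonneg_right h1 (Real.exp_pos x).le
  rw [h3] at h4
  nlinarith [mul_le_mul_of_nonneg_left h2 hx]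

lemma self_le_sinh {x : ℝ} (hx : 0 ≤ x) : x ≤ Real.sinh x := by
  rcases eq_or_lt_of_le hx with h | h
  · simp [← h]
  · exact (Real.self_lt_sinh_iff.2 h).le

open MeasureTheory in
lemma logTwoSinh_integrable {z : ℝ} (hz : 0 < z) :
    IntervalIntegrable (fun x => Real.log (2 * Real.sinh x)) volume 0 z := by
  rw [intervalIntegrable_iff_integrableOn_Ioc_of_le hz.le]
  have hlog : IntegrableOn Real.log (Set.Ioc 0 z) := by
    have hmaj : IntervalIntegrable (fun x : ℝ => 2 * x ^ (-(1:ℝ)/2) + |Real.log z|) volume 0 z :=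
      ((intervalIntegral.intervalIntegrable_rpow' (by norm_num)).const_mul 2).add
        intervalIntegrable_const
    rw [intervalIntegrable_iff_integrableOn_Ioc_of_le hz.le] at hmaj
    apply hmaj.mono' Real.measurable_log.aestronglyMeasurable
    rw [ae_restrict_iff' measurableSet_Ioc]
    filter_upwards with x hx
    rcases le_or_gt x 1 with h1 | h1
    · have hx0 := hx.1
      rw [Real.norm_eq_abs, abs_of_nonpos (Real.log_nonpos hx0.le h1)]
      have hlr : Real.log (x ^ (-(1:ℝ)/2)) = (-(1:ℝ)/2) * Real.log x := Real.log_rpow hx0 _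
      have hle : Real.log (x ^ (-(1:ℝ)/2)) ≤ x ^ (-(1:ℝ)/2) :=
        (Real.log_le_sub_one_of_pos (Real.rpow_pos_of_pos hx0 _)).trans (by linarith)
      have := abs_nonneg (Real.log z)
      nlinarith
    · rw [Real.norm_eq_abs, abs_of_nonneg (Real.log_nonneg h1.le)]
      have : Real.log x ≤ Real.log z := Real.log_le_log (by linarith) hx.2
      have h2 : (0:ℝ) ≤ 2 * x ^ (-(1:ℝ)/2) := by positivity
      have := le_abs_self (Real.log z)
      linarith
  have hH : IntegrableOn (fun x => Real.log (2 * Real.sinh x / x)) (Set.Ioc 0 z) := by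
    apply Integrable.mono' (g := fun _ : ℝ => Real.log (2 * Real.exp z))
    · exact integrableOn_const measure_Ioc_lt_top.ne
    · exact (Real.measurable_log.comp
        ((measurable_const.mul Real.measurable_sinh).div measurable_id)).aestronglyMeasurable
    · rw [ae_restrict_iff' measurableSet_Ioc]
      filter_upwards with x hx
      have hx0 := hx.1
      have ht2 : (2:ℝ) ≤ 2 * Real.sinh x / x := by
        rw [le_div_iff₀ hx0]
        nlinarith [self_le_sinh hx0.le]
      have htu : 2 * Real.sinh x / x ≤ 2 * Real.exp z := by
        rw [div_le_iff₀ hx0]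
        have := sinh_le_mul_exp hx0.le
        have hee : Real.exp x ≤ Real.exp z := Real.exp_le_exp.2 hx.2
        nlinarith [Real.exp_pos x]
      rw [Real.norm_eq_abs, abs_of_nonneg (Real.log_nonneg (by linarith))]
      exact Real.log_le_log (by linarith) htu
  have h2 : IntegrableOn ((fun x => Real.log (2 * Real.sinh x / x)) + Real.log)
      (Set.Ioc 0 z) := hH.add hlog
  apply h2.congr_fun ?_ measurableSet_Ioc
  intro x hx
  simp only [Pi.add_apply]
  have hx0 : (0:ℝ) < x := hx.1
  have hs : 0 < 2 * Real.sinh x / x := by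
    have := self_le_sinh hx0.le
    positivity
  rw [← Real.log_mul (ne_of_gt hs) (ne_of_gt hx0), div_mul_cancel₀]
  exact ne_of_gt hx0

noncomputable def fAfun (A u : ℝ) : ℝ := Real.log (2 * Real.cosh A - 2 * Real.cosh (A * u))

noncomputable def FAfun (A d : ℝ) : ℝ := ∫ u in (0:ℝ)..d, fAfun A u

lemma gApos {A : ℝ} (hA : 0 < A) {u : ℝ} (h0 : 0 ≤ u) (h1 : u < 1) :
    0 < 2 * Real.cosh A - 2 * Real.cosh (A * u) := by
  have : Real.cosh (A * u) < Real.cosh A := by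
    rw [Real.cosh_lt_cosh, abs_of_nonneg (mul_nonneg hA.le h0), abs_of_nonneg hA.le]
    nlinarith
  linarith

lemma fA_anti {A : ℝ} (hA : 0 < A) : AntitoneOn (fAfun A) (Set.Ico 0 1) := by
  intro u hu v hv huv
  unfold fAfun
  apply Real.log_le_log (gApos hA hv.1 hv.2)
  have : Real.cosh (A * u) ≤ Real.cosh (A * v) := by
    rw [Real.cosh_le_cosh, abs_of_nonneg (mul_nonneg hA.le hu.1), abs_of_nonneg (mul_nonneg hA.le hv.1)]
    exact mul_le_mul_of_nonneg_left huv hA.le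
  linarith

lemma fA_contOn {A : ℝ} (hA : 0 < A) {d : ℝ} (hd : d < 1) :
    ContinuousOn (fAfun A) (Set.Icc 0 d) := by
  apply ContinuousOn.log
  · fun_prop
  · intro x hx
    exact ne_of_gt (gApos hA hx.1 (lt_of_le_of_lt hx.2 hd))

lemma fA_intble {A : ℝ} (hA : 0 < A) {d x y : ℝ} (hd : d < 1)
    (hx : x ∈ Set.Icc 0 d) (hy : y ∈ Set.Icc 0 d) :
    IntervalIntegrable (fAfun A) MeasureTheory.volume x y :=
  ((fA_contOn hA hd).mono (Set.uIcc_subset_Icc hx hy)).intervalIntegrable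

lemma sum_range_eq_sum_Icc {M : Type*} [AddCommMonoid M] (g : ℕ → M) (k : ℕ) :
    ∑ i ∈ Finset.range k, g (i + 1) = ∑ j ∈ Finset.Icc 1 k, g j := by
  induction k with
  | zero => simp
  | succ n ih => rw [Finset.sum_range_succ, ih, Finset.sum_Icc_succ_top (by omega)]

open MeasureTheory in
lemma sum_le_int {A : ℝ} (hA : 0 < A) {N k : ℕ} (hN : 0 < N) (hk : (k:ℝ)/N < 1) :
    ∑ j ∈ Finset.Icc 1 k, fAfun A ((j:ℝ) / N) ≤ N * FAfun A ((k:ℝ) / N) := by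
  have hNR : (0:ℝ) < N := by exact_mod_cast hN
  have hanti : AntitoneOn (fun t : ℝ => fAfun A (t / N)) (Set.Icc (0:ℝ) (0 + k)) := by
    intro u hu v hv huv
    have huk : u ≤ (k:ℝ) := by simpa using hu.2
    have hvk : v ≤ (k:ℝ) := by simpa using hv.2
    refine fA_anti hA ⟨div_nonneg hu.1 hNR.le, ?_⟩ ⟨div_nonneg hv.1 hNR.le, ?_⟩ (by gcongr)
    · exact lt_of_le_of_lt (by gcongr) hk
    · exact lt_of_le_of_lt (by gcongr) hk
  have h := hanti.sum_le_integral
  calc ∑ j ∈ Finset.Icc 1 k, fAfun A ((j:ℝ) / N)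
      = ∑ i ∈ Finset.range k, (fun t : ℝ => fAfun A (t / N)) ((0:ℝ) + ((i + 1 : ℕ) : ℝ)) := by
        rw [← sum_range_eq_sum_Icc (fun j : ℕ => fAfun A ((j:ℝ) / N)) k]
        exact Finset.sum_congr rfl fun i _ => by simp
    _ ≤ ∫ x in (0:ℝ)..(0 + (k:ℝ)), fAfun A (x / N) := h
    _ = N * FAfun A ((k:ℝ) / N) := by
        rw [intervalIntegral.integral_comp_div (fAfun A) (ne_of_gt hNR)]
        simp [FAfun, smul_eq_mul]

open MeasureTheory in
lemma int_le_sum {A : ℝ} (hA : 0 < A) {N m : ℕ} (hN : 0 < N) (hm : (1+(m:ℝ))/N < 1) :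
    (N:ℝ) * (FAfun A ((1+(m:ℝ)) / N) - FAfun A (1 / N)) ≤
      ∑ j ∈ Finset.Icc 1 m, fAfun A ((j:ℝ) / N) := by
  have hNR : (0:ℝ) < N := by exact_mod_cast hN
  have hanti : AntitoneOn (fun t : ℝ => fAfun A (t / N)) (Set.Icc (1:ℝ) (1 + m)) := by
    intro u hu v hv huv
    have huk : u ≤ 1 + (m:ℝ) := hu.2
    have hvk : v ≤ 1 + (m:ℝ) := hv.2
    have h1 : (0:ℝ) ≤ u := by linarith [hu.1]
    have h2 : (0:ℝ) ≤ v := by linarith [hv.1]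
    refine fA_anti hA ⟨div_nonneg h1 hNR.le, ?_⟩ ⟨div_nonneg h2 hNR.le, ?_⟩ (by gcongr)
    · exact lt_of_le_of_lt (by gcongr) hm
    · exact lt_of_le_of_lt (by gcongr) hm
  have h := hanti.integral_le_sum
  have hle : (1:ℝ)/N ≤ (1+(m:ℝ))/N := by gcongr; linarith [Nat.cast_nonneg (α := ℝ) m]
  have hint1 : IntervalIntegrable (fAfun A) volume 0 ((1+(m:ℝ))/N) :=
    fA_intble hA hm ⟨le_refl 0, by positivity⟩ ⟨by positivity, le_refl _⟩
  have hint2 : IntervalIntegrable (fAfun A) volume 0 ((1:ℝ)/N) :=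
    fA_intble hA hm ⟨le_refl 0, by positivity⟩ ⟨by positivity, hle⟩
  have hkey : ∫ x in ((1:ℝ)/N)..((1+(m:ℝ))/N), fAfun A x
      = FAfun A ((1+(m:ℝ))/N) - FAfun A (1/N) :=
    (intervalIntegral.integral_interval_sub_left hint1 hint2).symm
  have hcomp : ∫ x in (1:ℝ)..(1 + (m:ℝ)), fAfun A (x / N)
      = N * (FAfun A ((1+(m:ℝ))/N) - FAfun A (1/N)) := by
    rw [intervalIntegral.integral_comp_div (fAfun A) (ne_of_gt hNR), hkey, smul_eq_mul]
  calc (N:ℝ) * (FAfun A ((1+(m:ℝ)) / N) - FAfun A (1 / N))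
      = ∫ x in (1:ℝ)..(1 + (m:ℝ)), fAfun A (x / N) := hcomp.symm
    _ ≤ ∑ i ∈ Finset.range m, (fun t : ℝ => fAfun A (t / N)) ((1:ℝ) + (i : ℕ)) := h
    _ = ∑ j ∈ Finset.Icc 1 m, fAfun A ((j:ℝ) / N) := by
        rw [← sum_range_eq_sum_Icc (fun j : ℕ => fAfun A ((j:ℝ) / N)) m]
        refine Finset.sum_congr rfl fun i _ => by push_cast; ring_nf

set_option maxHeartbeats 1000000 in
open MeasureTheory Filter in
theorem stmt14 (r : ℝ) (hr : 0 < r) (hbig : _root_.arcosh (3 / 2) < 2 * π * r) :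
    Filter.Tendsto (fun N : ℕ => (2 * π * r / N) * Real.log (JFigEightReal r N))
      Filter.atTop
      (nhds (2 * GammaLob (π * r + phih r / 2) - 2 * GammaLob (π * r - phih r / 2))) := by
  have hπ := Real.pi_pos
  set A := 2 * π * r with hAdef
  have hA : 0 < A := by rw [hAdef]; positivity
  have harc32 : Real.cosh (_root_.arcosh (3/2 : ℝ)) = 3/2 := _root_.cosh_arcosh (by norm_num)
  have hcoshA : (3:ℝ)/2 < Real.cosh A := by
    rw [← harc32, Real.cosh_lt_cosh, abs_of_nonneg (_root_.arcosh_nonneg (by norm_num)),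
      abs_of_nonneg hA.le]
    exact hbig
  have hy1 : (1:ℝ) < Real.cosh A - 1/2 := by linarith
  set φ := phih r with hφdef
  have hφeq : φ = _root_.arcosh (Real.cosh A - 1/2) := rfl
  have hcoshφ : Real.cosh φ = Real.cosh A - 1/2 := by rw [hφeq]; exact _root_.cosh_arcosh (by linarith)
  have hφ0 : 0 < φ := by
    rw [hφeq, _root_.arcosh]
    apply Real.log_pos
    nlinarith [Real.sqrt_nonneg ((Real.cosh A - 1/2) ^ 2 - 1)]
  have hφA : φ < A := by
    by_contra h
    push_neg at h
    have hle : Real.cosh A ≤ Real.cosh φ := by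
      rw [Real.cosh_le_cosh, abs_of_nonneg hA.le, abs_of_nonneg (by linarith)]
      exact h
    rw [hcoshφ] at hle; linarith
  set c := φ / A with hcdef
  have hc0 : 0 < c := div_pos hφ0 hA
  have hc1 : c < 1 := (div_lt_one hA).2 hφA
  have hAc : A * c = φ := by rw [hcdef]; field_simp
  set c₁ := (1 + c) / 2 with hc₁def
  have hc₁1 : c₁ < 1 := by rw [hc₁def]; linarith
  have hcc₁ : c ≤ c₁ := by rw [hc₁def]; linarith
  have hc₁0 : 0 ≤ c₁ := by rw [hc₁def]; linarith
  have hfc : fAfun A c = 0 := by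
    rw [fAfun, hAc, hcoshφ]
    have h1 : 2 * Real.cosh A - 2 * (Real.cosh A - 1 / 2) = 1 := by ring
    rw [h1, Real.log_one]
  -- monotonicity of FA up to c
  have hFAle : ∀ d : ℝ, 0 ≤ d → d ≤ c → FAfun A d ≤ FAfun A c := by
    intro d hd0 hdc
    have hint1 : IntervalIntegrable (fAfun A) volume 0 d :=
      fA_intble hA hc₁1 ⟨le_refl 0, hc₁0⟩ ⟨hd0, hdc.trans hcc₁⟩
    have hint2 : IntervalIntegrable (fAfun A) volume d c :=
      fA_intble hA hc₁1 ⟨hd0, hdc.trans hcc₁⟩ ⟨hc0.le, hcc₁⟩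
    have hca : FAfun A d + ∫ u in d..c, fAfun A u = FAfun A c :=
      intervalIntegral.integral_add_adjacent_intervals hint1 hint2
    have hnn : 0 ≤ ∫ u in d..c, fAfun A u := by
      apply intervalIntegral.integral_nonneg hdc
      intro x hx
      have h1 : fAfun A c ≤ fAfun A x :=
        fA_anti hA ⟨hd0.trans hx.1, lt_of_le_of_lt hx.2 hc1⟩ ⟨hc0.le, hc1⟩ hx.2
      rw [hfc] at h1; exact h1
    linarith
  -- identity for the limit value
  set b := π * r with hbdef
  have hb : 0 < b := by rw [hbdef]; positivity
  have hbA : A = 2 * b := by rw [hAdef, hbdef]; ring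
  have hbc : b * c = φ / 2 := by
    have h := hAc
    rw [hbA] at h; linarith
  have htarget : 2 * GammaLob (π * r + φ / 2) - 2 * GammaLob (π * r - φ / 2)
      = A * FAfun A c := by
    have hG1 : ∀ u ∈ Set.uIcc (0:ℝ) c, fAfun A u =
        Real.log (2 * Real.sinh (b + b * u)) + Real.log (2 * Real.sinh (b + -b * u)) := by
      intro u hu
      rw [Set.uIcc_of_le hc0.le] at hu
      have hp : 0 < b + b * u := by nlinarith [hu.1]
      have hq : 0 < b + -b * u := by nlinarith [hu.2, hc1]
      have h2 := two_cosh_sub (b + b * u) (b + -b * u)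
      have e1 : (b + b * u) + (b + -b * u) = A := by rw [hbA]; ring
      have e2 : (b + b * u) - (b + -b * u) = A * u := by ring
      rw [e1, e2] at h2
      have hkey : 2 * Real.cosh A - 2 * Real.cosh (A * u)
          = 2 * Real.sinh (b + b * u) * (2 * Real.sinh (b + -b * u)) := by linarith
      rw [fAfun, hkey, Real.log_mul (by positivity) (by positivity)]
    have hcont1 : ContinuousOn (fun u : ℝ => Real.log (2 * Real.sinh (b + b * u)))
        (Set.uIcc 0 c) := by
      apply ContinuousOn.log (by fun_prop)
      intro x hx
      rw [Set.uIcc_of_le hc0.le] at hx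
      have : 0 < b + b * x := by nlinarith [hx.1]
      have := Real.sinh_pos_iff.2 this
      positivity
    have hcont2 : ContinuousOn (fun u : ℝ => Real.log (2 * Real.sinh (b + -b * u)))
        (Set.uIcc 0 c) := by
      apply ContinuousOn.log (by fun_prop)
      intro x hx
      rw [Set.uIcc_of_le hc0.le] at hx
      have : 0 < b + -b * x := by nlinarith [hx.2, hc1]
      have := Real.sinh_pos_iff.2 this
      positivity
    have hFc : FAfun A c = (∫ u in (0:ℝ)..c, Real.log (2 * Real.sinh (b + b * u)))
        + ∫ u in (0:ℝ)..c, Real.log (2 * Real.sinh (b + -b * u)) := by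
      rw [FAfun, intervalIntegral.integral_congr hG1,
        intervalIntegral.integral_add hcont1.intervalIntegrable hcont2.intervalIntegrable]
    have hA1 : ∫ u in (0:ℝ)..c, Real.log (2 * Real.sinh (b + b * u))
        = b⁻¹ * (GammaLob (b + b * c) - GammaLob b) := by
      have hsub1 : GammaLob (b + b * c) - GammaLob b
          = ∫ x in b..(b + b * c), Real.log (2 * Real.sinh x) :=
        intervalIntegral.integral_interval_sub_left
          (logTwoSinh_integrable (show 0 < b + b * c by nlinarith))
          (logTwoSinh_integrable hb)
      rw [intervalIntegral.integral_comp_add_mul (fun x => Real.log (2 * Real.sinh x))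
        (ne_of_gt hb) b, smul_eq_mul]
      simp only [mul_zero, add_zero]
      rw [hsub1]
    have hA2 : ∫ u in (0:ℝ)..c, Real.log (2 * Real.sinh (b + -b * u))
        = (-b)⁻¹ * (GammaLob (b + -b * c) - GammaLob b) := by
      have hsub2 : GammaLob (b + -b * c) - GammaLob b
          = ∫ x in b..(b + -b * c), Real.log (2 * Real.sinh x) :=
        intervalIntegral.integral_interval_sub_left
          (logTwoSinh_integrable (show 0 < b + -b * c by nlinarith))
          (logTwoSinh_integrable hb)
      rw [intervalIntegral.integral_comp_add_mul (fun x => Real.log (2 * Real.sinh x))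
        (neg_ne_zero.2 (ne_of_gt hb)) b, smul_eq_mul]
      simp only [mul_zero, add_zero]
      rw [hsub2]
    have e1 : π * r + φ / 2 = b + b * c := by
      have h := hbc; rw [hbdef] at h ⊢; linarith
    have e2 : π * r - φ / 2 = b + -b * c := by
      have h := hbc; rw [hbdef] at h ⊢; linarith
    have halg : ∀ X Y Z : ℝ, 2 * b * (b⁻¹ * (X - Z) + (-b)⁻¹ * (Y - Z)) = 2 * X - 2 * Y := by
      intro X Y Z
      have hbb : b * b⁻¹ = 1 := mul_inv_cancel₀ (ne_of_gt hb)
      rw [inv_neg]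
      linear_combination (2 * (X - Z) - 2 * (Y - Z)) * hbb
    rw [e1, e2, hFc, hA1, hA2, hbA, halg]
  rw [htarget]
  -- uniform bound on fA over [0, c₁]
  obtain ⟨M, hM⟩ := (isCompact_Icc : IsCompact (Set.Icc (0:ℝ) c₁)).exists_bound_of_continuousOn
    (fA_contOn hA hc₁1)
  have hM0 : 0 ≤ M := (norm_nonneg _).trans (hM 0 ⟨le_refl 0, hc₁0⟩)
  have hLip : ∀ x y : ℝ, x ∈ Set.Icc 0 c₁ → y ∈ Set.Icc 0 c₁ →
      |FAfun A y - FAfun A x| ≤ M * |y - x| := by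
    intro x y hx hy
    have hxy : FAfun A y - FAfun A x = ∫ u in x..y, fAfun A u :=
      intervalIntegral.integral_interval_sub_left
        (fA_intble hA hc₁1 ⟨le_refl 0, hc₁0⟩ hy)
        (fA_intble hA hc₁1 ⟨le_refl 0, hc₁0⟩ hx)
    rw [hxy, ← Real.norm_eq_abs]
    apply intervalIntegral.norm_integral_le_of_norm_le_const
    intro z hz
    exact hM z (Set.uIcc_subset_Icc hx hy (Set.uIoc_subset_uIcc hz))
  set S : ℕ → ℝ := fun N => ∑ j ∈ Finset.Icc 1 ⌊c * (N:ℝ)⌋₊, fAfun A ((j:ℝ) / N) with hSdef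
  have hev : ∀ᶠ N : ℕ in Filter.atTop, 1 ≤ N ∧ (1:ℝ)/N ≤ (1 - c)/2 := by
    obtain ⟨N₀, hN₀⟩ := exists_nat_gt (2 / (1 - c))
    refine Filter.eventually_atTop.2 ⟨max N₀ 1, fun N hN => ⟨le_trans (le_max_right _ _) hN, ?_⟩⟩
    have h1 : (N₀:ℝ) ≤ N := Nat.cast_le.2 (le_trans (le_max_left _ _) hN)
    have h2 : 2 / (1 - c) < (N:ℝ) := lt_of_lt_of_le hN₀ h1
    have hc1' : (0:ℝ) < 1 - c := by linarith
    have h3 : (0:ℝ) < N := lt_trans (by positivity) h2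
    rw [div_lt_iff₀ hc1'] at h2
    rw [div_le_div_iff₀ h3 (by norm_num : (0:ℝ) < 2)]
    nlinarith
  have hkey : ∀ᶠ N : ℕ in Filter.atTop,
      (A * (FAfun A c - 2 * M / N) ≤ A * (S N / N) ∧ A * (S N / N) ≤ A * FAfun A c) ∧
      (A * (S N / N) ≤ A / N * Real.log (JFigEightReal r N) ∧
       A / N * Real.log (JFigEightReal r N) ≤ A * (Real.log N / N) + A * FAfun A c) := by
    filter_upwards [hev] with N hN
    obtain ⟨hN1, hNc⟩ := hN
    have hN0 : 0 < N := hN1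
    have hNR : (0:ℝ) < N := by exact_mod_cast hN1
    set m := ⌊c * (N:ℝ)⌋₊ with hmdef
    have hmle : (m:ℝ) ≤ c * N := Nat.floor_le (by positivity)
    have hmgt : c * (N:ℝ) < m + 1 := Nat.lt_floor_add_one _
    have hmN : (m:ℝ)/N ≤ c := by rw [div_le_iff₀ hNR]; linarith
    have hcN : c * (N:ℝ) < N := by
      have h := mul_lt_mul_of_pos_right hc1 hNR
      simpa using h
    have hmltN : m < N := by
      have hx : (m:ℝ) < N := lt_of_le_of_lt hmle hcN
      exact_mod_cast hx
    have hNc' : (1:ℝ) ≤ (1 - c)/2 * N := by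
      rw [div_le_iff₀ hNR] at hNc
      linarith
    have hm1c : (1 + (m:ℝ))/N ≤ c₁ := by
      rw [div_le_iff₀ hNR, hc₁def]
      have hexp : (1 + c)/2 * (N:ℝ) = c * N + (1 - c)/2 * N := by ring
      linarith
    have hm1lt1 : (1 + (m:ℝ))/N < 1 := lt_of_le_of_lt hm1c hc₁1
    -- product-to-exp rewriting of J
    have hJ : JFigEightReal r N
        = ∑ k ∈ Finset.range N, Real.exp (∑ j ∈ Finset.Icc 1 k, fAfun A ((j:ℝ)/N)) := by
      rw [JFigEightReal]
      apply Finset.sum_congr rfl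
      intro k hk
      rw [Real.exp_sum]
      apply Finset.prod_congr rfl
      intro j hj
      have hjk : j ≤ k := (Finset.mem_Icc.1 hj).2
      have hkN : k < N := Finset.mem_range.1 hk
      have hjN : (j:ℝ)/N < 1 := by
        rw [div_lt_one hNR]
        exact_mod_cast lt_of_le_of_lt hjk hkN
      have hpos := gApos hA (by positivity) hjN
      rw [← hAdef, mul_div_assoc, fAfun, Real.exp_log hpos]
    have hJpos : 0 < JFigEightReal r N := by
      rw [hJ]
      exact Finset.sum_pos (fun k _ => Real.exp_pos _) ⟨0, Finset.mem_range.2 (by omega)⟩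
    -- upper bound for every partial sum
    have claim1 : ∀ k : ℕ, k ≤ m → ∑ j ∈ Finset.Icc 1 k, fAfun A ((j:ℝ)/N) ≤ N * FAfun A c := by
      intro k hkm
      have hkm' : (k:ℝ) ≤ m := by exact_mod_cast hkm
      have hkc : (k:ℝ)/N ≤ c := by rw [div_le_iff₀ hNR]; linarith
      have hkN1 : (k:ℝ)/N < 1 := lt_of_le_of_lt hkc hc1
      have h1 := sum_le_int hA hN0 hkN1
      have h2 : FAfun A ((k:ℝ)/N) ≤ FAfun A c := hFAle _ (by positivity) hkc
      have h3 := mul_le_mul_of_nonneg_left h2 hNR.le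
      linarith
    have hSk : ∀ k : ℕ, k < N → ∑ j ∈ Finset.Icc 1 k, fAfun A ((j:ℝ)/N) ≤ N * FAfun A c := by
      intro k hkN
      rcases le_or_gt k m with hkm | hkm
      · exact claim1 k hkm
      · have hsplit : ∑ j ∈ Finset.Icc 1 k, fAfun A ((j:ℝ)/N)
            = ∑ j ∈ Finset.Icc 1 m, fAfun A ((j:ℝ)/N)
              + ∑ j ∈ Finset.Ioc m k, fAfun A ((j:ℝ)/N) := by
          rw [show Finset.Icc 1 k = Finset.Ioc 0 k from by ext x; simp; omega,
            show Finset.Icc 1 m = Finset.Ioc 0 m from by ext x; simp; omega,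
            Finset.sum_Ioc_consecutive _ (Nat.zero_le m) hkm.le]
        rw [hsplit]
        have hneg : ∑ j ∈ Finset.Ioc m k, fAfun A ((j:ℝ)/N) ≤ 0 := by
          apply Finset.sum_nonpos
          intro j hj
          obtain ⟨hj1, hj2⟩ := Finset.mem_Ioc.1 hj
          have hj1' : (m:ℝ) + 1 ≤ j := by exact_mod_cast hj1
          have hjN : (j:ℝ)/N < 1 := by
            rw [div_lt_one hNR]
            exact_mod_cast lt_of_le_of_lt hj2 hkN
          have hcj : c ≤ (j:ℝ)/N := by rw [le_div_iff₀ hNR]; linarith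
          have h := fA_anti hA ⟨hc0.le, hc1⟩ ⟨by positivity, hjN⟩ hcj
          rw [hfc] at h; exact h
        have := claim1 m (le_refl m)
        linarith
    -- upper bound for J
    have hJle : JFigEightReal r N ≤ N * Real.exp (N * FAfun A c) := by
      rw [hJ]
      calc ∑ k ∈ Finset.range N, Real.exp (∑ j ∈ Finset.Icc 1 k, fAfun A ((j:ℝ)/N))
          ≤ ∑ _k ∈ Finset.range N, Real.exp ((N:ℝ) * FAfun A c) :=
            Finset.sum_le_sum fun k hk => Real.exp_le_exp.2 (hSk k (Finset.mem_range.1 hk))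
        _ = N * Real.exp ((N:ℝ) * FAfun A c) := by
            rw [Finset.sum_const, Finset.card_range, nsmul_eq_mul]
    have hlogJ_ub : Real.log (JFigEightReal r N) ≤ Real.log N + N * FAfun A c := by
      have h := Real.log_le_log hJpos hJle
      rwa [Real.log_mul (ne_of_gt hNR) (Real.exp_ne_zero _), Real.log_exp] at h
    have hub : A / N * Real.log (JFigEightReal r N)
        ≤ A * (Real.log N / N) + A * FAfun A c := by
      have h1 : A / N * Real.log (JFigEightReal r N)
          ≤ A / N * (Real.log N + N * FAfun A c) :=
        mul_le_mul_of_nonneg_left hlogJ_ub (by positivity)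
      have h2 : A / N * (Real.log N + N * FAfun A c)
          = A * (Real.log N / N) + A * FAfun A c := by
        field_simp
      linarith
    -- lower bound for J
    have hSN : S N = ∑ j ∈ Finset.Icc 1 m, fAfun A ((j:ℝ)/N) := rfl
    have hJge : Real.exp (S N) ≤ JFigEightReal r N := by
      rw [hJ, hSN]
      exact Finset.single_le_sum
        (f := fun k : ℕ => Real.exp (∑ j ∈ Finset.Icc 1 k, fAfun A ((j:ℝ)/N)))
        (fun k _ => (Real.exp_pos _).le) (Finset.mem_range.2 hmltN)
    have hSlog : S N ≤ Real.log (JFigEightReal r N) := by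
      have h := Real.log_le_log (Real.exp_pos _) hJge
      rwa [Real.log_exp] at h
    have hlb : A * (S N / N) ≤ A / N * Real.log (JFigEightReal r N) := by
      have h0 : A * (S N / N) = A / N * S N := by ring
      rw [h0]
      exact mul_le_mul_of_nonneg_left hSlog (by positivity)
    -- bounds on S N / N
    have hSub : S N / N ≤ FAfun A c := by
      rw [div_le_iff₀ hNR]
      have := hSk m hmltN
      rw [hSN]
      linarith
    have hSlb : FAfun A ((1 + (m:ℝ))/N) - FAfun A (1/N) ≤ S N / N := by
      have h := int_le_sum hA hN0 hm1lt1
      rw [le_div_iff₀ hNR, hSN]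
      linarith
    -- Lipschitz estimates
    have hmem1 : (1 + (m:ℝ))/N ∈ Set.Icc (0:ℝ) c₁ := ⟨by positivity, hm1c⟩
    have hmemc : c ∈ Set.Icc (0:ℝ) c₁ := ⟨hc0.le, hcc₁⟩
    have hmem1N : (1:ℝ)/N ∈ Set.Icc (0:ℝ) c₁ :=
      ⟨by positivity, le_trans hNc (by rw [hc₁def]; linarith)⟩
    have hmem0 : (0:ℝ) ∈ Set.Icc (0:ℝ) c₁ := ⟨le_refl 0, hc₁0⟩
    have habs : |(1 + (m:ℝ))/N - c| ≤ 1/N := by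
      have h1 : c ≤ (1 + (m:ℝ))/N := by rw [le_div_iff₀ hNR]; linarith
      have h2 : (1 + (m:ℝ))/N ≤ c + 1/N := by
        rw [div_le_iff₀ hNR]
        have : (c + 1/N) * N = c * N + 1 := by field_simp
        rw [this]
        linarith
      rw [abs_of_nonneg (by linarith)]
      linarith
    have hd1 : |FAfun A ((1 + (m:ℝ))/N) - FAfun A c| ≤ M * (1/N) := by
      have h := hLip c ((1 + (m:ℝ))/N) hmemc hmem1
      calc |FAfun A ((1 + (m:ℝ))/N) - FAfun A c| ≤ M * |(1 + (m:ℝ))/N - c| := h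
        _ ≤ M * (1/N) := mul_le_mul_of_nonneg_left habs hM0
    have hd2 : |FAfun A (1/N)| ≤ M * (1/N) := by
      have h := hLip 0 (1/N) hmem0 hmem1N
      have hFA0 : FAfun A 0 = 0 := intervalIntegral.integral_same
      rw [hFA0, sub_zero, sub_zero] at h
      calc |FAfun A (1/N)| ≤ M * |(1:ℝ)/N| := h
        _ = M * (1/N) := by rw [abs_of_nonneg (by positivity)]
    have hSlb2 : A * (FAfun A c - 2 * M / N) ≤ A * (S N / N) := by
      apply mul_le_mul_of_nonneg_left ?_ hA.le
      have e1 := (abs_le.1 hd1).1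
      have e2 := (abs_le.1 hd2).2
      have e3 : 2 * M / N = M * (1/N) + M * (1/N) := by ring
      linarith
    exact ⟨⟨hSlb2, mul_le_mul_of_nonneg_left hSub hA.le⟩, hlb, hub⟩
  have hLtend : Filter.Tendsto (fun N : ℕ => A * (S N / N)) Filter.atTop
      (nhds (A * FAfun A c)) := by
    have h1 : Filter.Tendsto (fun N : ℕ => (2 * M : ℝ)/N) Filter.atTop (nhds 0) :=
      tendsto_const_div_atTop_nhds_zero_nat _
    have h2 : Filter.Tendsto (fun N : ℕ => FAfun A c - 2 * M/N) Filter.atTop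
        (nhds (FAfun A c - 0)) := tendsto_const_nhds.sub h1
    rw [sub_zero] at h2
    exact tendsto_of_tendsto_of_tendsto_of_le_of_le' (h2.const_mul A) tendsto_const_nhds
      (hkey.mono fun N h => h.1.1) (hkey.mono fun N h => h.1.2)
  have hUtend : Filter.Tendsto (fun N : ℕ => A * (Real.log N / N) + A * FAfun A c)
      Filter.atTop (nhds (A * FAfun A c)) := by
    have h0 : Filter.Tendsto (fun x : ℝ => Real.log x / x) Filter.atTop (nhds 0) :=
      Real.isLittleO_log_id_atTop.tendsto_div_nhds_zero
    have h1 : Filter.Tendsto (fun N : ℕ => Real.log N / N) Filter.atTop (nhds 0) := by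
      have := h0.comp tendsto_natCast_atTop_atTop
      exact this
    have h2 := (h1.const_mul A).add (tendsto_const_nhds (x := A * FAfun A c))
    simpa using h2
  exact tendsto_of_tendsto_of_tendsto_of_le_of_le' hLtend hUtend
    (hkey.mono fun N h => h.2.1) (hkey.mono fun N h => h.2.2)
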